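/- Let G be a connected graph with a vertex cover U of size t. Then the lazy cop number satisfies c_lazy(G) ≤ ⌈t/2⌉ + 1, and the attacking cop number satisfies c_attack(G) ≤ ⌈t/2⌉ + 1. -/

import Mathlib

open SimpleGraph

variable {V : Type*}

/-- A (positional) strategy for `k` cops on the graph `G`: an initial placement and a
move function; each cop may stay or move to an adjacent vertex. -/
structure CopStrat (G : SimpleGraph V) (k : ℕ) where
  init : Fin k → V
  move : (Fin k → V) → V → Fin k → V
  valid : ∀ c r i, move c r i = c i ∨ G.Adj (c i) (move c r i)

/-- A strategy for the robber: an initial placement (knowing the cops' placement) and a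
move function; the robber may stay or move to an adjacent vertex. -/
structure RobStrat (G : SimpleGraph V) (k : ℕ) where
  init : (Fin k → V) → V
  move : (Fin k → V) → V → V
  valid : ∀ c r, move c r = r ∨ G.Adj r (move c r)

/-- The play determined by initial placements and move functions: position of the cops and
of the robber after `n` full rounds (cops move first in each round). -/
def gplay {k : ℕ} (ci : Fin k → V) (cm : (Fin k → V) → V → Fin k → V)
    (ri : (Fin k → V) → V) (rm : (Fin k → V) → V → V) : ℕ → (Fin k → V) × V
  | 0 => (ci, ri ci)
  | n + 1 =>
    let p := gplay ci cm ri rm n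
    let c' := cm p.1 p.2
    (c', rm c' p.2)

/-- The robber is caught: at some moment (either on a cops' move, or because the
positions already coincide) a cop occupies the robber's vertex. -/
def gCaught {k : ℕ} (ci : Fin k → V) (cm : (Fin k → V) → V → Fin k → V)
    (ri : (Fin k → V) → V) (rm : (Fin k → V) → V → V) : Prop :=
  ∃ n, ∃ i,
    (gplay ci cm ri rm n).1 i = (gplay ci cm ri rm n).2 ∨
      cm (gplay ci cm ri rm n).1 (gplay ci cm ri rm n).2 i = (gplay ci cm ri rm n).2

/-- `k` cops have a winning strategy on `G`. -/
def CopsWin (G : SimpleGraph V) (k : ℕ) : Prop :=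
  ∃ CS : CopStrat G k, ∀ RS : RobStrat G k,
    gCaught CS.init CS.move RS.init RS.move

/-- The cop number of `G`. -/
noncomputable def copNumber (G : SimpleGraph V) : ℕ := sInf {k | CopsWin G k}


/-- A lazy cop strategy: at most one cop moves in each cops' turn. -/
structure LazyCopStrat (G : SimpleGraph V) (k : ℕ) extends CopStrat G k where
  lazy : ∀ c r i j, move c r i ≠ c i → move c r j ≠ c j → i = j

/-- `k` lazy cops have a winning strategy on `G`. -/
def LazyCopsWin (G : SimpleGraph V) (k : ℕ) : Prop :=
  ∃ CS : LazyCopStrat G k, ∀ RS : RobStrat G k,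
    gCaught CS.init CS.move RS.init RS.move

/-- The lazy cop number of `G`. -/
noncomputable def lazyCopNumber (G : SimpleGraph V) : ℕ := sInf {k | LazyCopsWin G k}

/-- A cop strategy in the attacking game: positions are `Option V` (`none` = eliminated);
eliminated cops stay eliminated, surviving cops stay or move to an adjacent vertex. -/
structure AttackCopStrat (G : SimpleGraph V) (k : ℕ) where
  init : Fin k → V
  move : (Fin k → Option V) → V → Fin k → Option V
  valid : ∀ c r i, (c i = none → move c r i = none) ∧
    ∀ x, c i = some x → move c r i = some x ∨ ∃ y, G.Adj x y ∧ move c r i = some y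

/-- A robber strategy in the attacking game; moving onto a vertex occupied by a cop
constitutes an attack. -/
structure AttackRobStrat (G : SimpleGraph V) (k : ℕ) where
  init : (Fin k → Option V) → V
  move : (Fin k → Option V) → V → V
  valid : ∀ c r, move c r = r ∨ G.Adj r (move c r)

/-- The play of the attacking game: in each round the cops move, then the robber moves;
if the robber moves onto a vertex occupied by exactly one cop, that cop is eliminated
(if it is occupied by two or more cops, nobody is eliminated and the robber will be
caught there). -/
def aplay [DecidableEq V] {G : SimpleGraph V} {k : ℕ}
    (CS : AttackCopStrat G k) (RS : AttackRobStrat G k) :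
    ℕ → (Fin k → Option V) × V
  | 0 => ((fun i => some (CS.init i)), RS.init fun i => some (CS.init i))
  | n + 1 =>
    let p := aplay CS RS n
    let c' := CS.move p.1 p.2
    let r' := RS.move c' p.2
    if r' ≠ p.2 ∧ (Finset.univ.filter fun i => c' i = some r').card = 1 then
      ((fun i => if c' i = some r' then none else c' i), r')
    else (c', r')

/-- The robber is caught in the attacking game: at some moment a (surviving) cop occupies
the robber's vertex, either after the cops' move or after the robber's move (in particular
when the robber attacks a vertex holding at least two cops). -/
def AttackCaught [DecidableEq V] {G : SimpleGraph V} {k : ℕ}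
    (CS : AttackCopStrat G k) (RS : AttackRobStrat G k) : Prop :=
  ∃ n, (∃ i, (aplay CS RS n).1 i = some (aplay CS RS n).2) ∨
    ∃ i, CS.move (aplay CS RS n).1 (aplay CS RS n).2 i = some (aplay CS RS n).2

/-- `k` cops have a winning strategy against an attacking robber on `G`. -/
def AttackCopsWin [DecidableEq V] (G : SimpleGraph V) (k : ℕ) : Prop :=
  ∃ CS : AttackCopStrat G k, ∀ RS : AttackRobStrat G k, AttackCaught CS RS

/-- The attacking cop number of `G`. -/
noncomputable def attackCopNumber [DecidableEq V] (G : SimpleGraph V) : ℕ :=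
  sInf {k | AttackCopsWin G k}

/-- A fully active cop strategy: every cop must move to an adjacent vertex each turn. -/
structure ActiveCopStrat (G : SimpleGraph V) (k : ℕ) where
  init : Fin k → V
  move : (Fin k → V) → V → Fin k → V
  valid : ∀ c r i, G.Adj (c i) (move c r i)

/-- A fully active robber strategy: the robber must move to an adjacent vertex each turn. -/
structure ActiveRobStrat (G : SimpleGraph V) (k : ℕ) where
  init : (Fin k → V) → V
  move : (Fin k → V) → V → V
  valid : ∀ c r, G.Adj r (move c r)

/-- `k` fully active cops have a winning strategy on `G` (against a fully active robber). -/
def ActiveCopsWin (G : SimpleGraph V) (k : ℕ) : Prop :=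
  ∃ CS : ActiveCopStrat G k, ∀ RS : ActiveRobStrat G k,
    gCaught CS.init CS.move RS.init RS.move

/-- The fully active cop number of `G`. -/
noncomputable def activeCopNumber (G : SimpleGraph V) : ℕ :=
  sInf {k | ActiveCopsWin G k}

/-- `U` is a vertex cover of `G`. -/
def IsVertexCover {V : Type*} (G : SimpleGraph V) (U : Finset V) : Prop :=
  ∀ ⦃x y : V⦄, G.Adj x y → x ∈ U ∨ y ∈ U


section Aux
attribute [local instance] Classical.propDecidable
variable {V : Type*} {G : SimpleGraph V}

lemma exists_closer (hG : G.Connected) {a b : V} (h : a ≠ b) :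
    ∃ y, G.Adj a y ∧ G.dist y b < G.dist a b := by
  obtain ⟨p, hp⟩ := hG.exists_walk_length_eq_dist a b
  cases p with
  | nil => exact absurd rfl h
  | cons ha q =>
      refine ⟨_, ha, ?_⟩
      have := SimpleGraph.dist_le q
      simp only [Walk.length_cons] at hp
      omega

noncomputable def toward (hG : G.Connected) (a b : V) : V :=
  if h : a = b then a else (exists_closer hG h).choose

lemma toward_eq_or_adj (hG : G.Connected) (a b : V) :
    toward hG a b = a ∨ G.Adj a (toward hG a b) := by
  unfold toward
  split
  · exact Or.inl rfl
  · next h => exact Or.inr (exists_closer hG h).choose_spec.1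

lemma toward_dist (hG : G.Connected) {a b : V} (h : a ≠ b) :
    G.dist (toward hG a b) b < G.dist a b := by
  unfold toward
  rw [dif_neg h]
  exact (exists_closer hG h).choose_spec.2

lemma dist_lt_card [Fintype V] (hG : G.Connected) (a b : V) :
    G.dist a b < Fintype.card V := by
  obtain ⟨p, hp⟩ := hG.exists_walk_length_eq_dist a b
  calc G.dist a b ≤ p.bypass.length := hp ▸ SimpleGraph.dist_le p.bypass
    _ < Fintype.card V := p.bypass_isPath.length_lt

/-- Greedy construction of stations `S` and residual set `W`. -/
lemma greedy (G : SimpleGraph V) : ∀ (N : ℕ) (Wc : Finset V) [DecidableEq V], Wc.card ≤ N →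
    ∃ S W : Finset V, W ⊆ Wc ∧ 2 * S.card + W.card ≤ Wc.card ∧
      (∀ v w1 w2, w1 ∈ W → w2 ∈ W → (w1 = v ∨ G.Adj v w1) → (w2 = v ∨ G.Adj v w2) → w1 = w2) ∧
      (∀ u ∈ Wc, u ∉ W → ∃ s ∈ S, u = s ∨ G.Adj s u) := by
  intro N
  induction N with
  | zero =>
      intro Wc _ hc
      exact ⟨∅, Wc, le_refl _, by simp, by
        intro v w1 w2 h1 h2
        have : Wc = ∅ := Finset.card_eq_zero.mp (by omega)
        simp [this] at h1, by intro u hu hnu; exact absurd hu hnu⟩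
  | succ N ih =>
      intro Wc _ hc
      by_cases hex : ∃ v w1 w2, w1 ∈ Wc ∧ w2 ∈ Wc ∧ w1 ≠ w2 ∧ (w1 = v ∨ G.Adj v w1) ∧
          (w2 = v ∨ G.Adj v w2)
      · obtain ⟨v, w1, w2, hw1, hw2, hne, hd1, hd2⟩ := hex
        set Wc' := Wc.filter (fun x => ¬(x = v ∨ G.Adj v x)) with hWc'
        have hsub : Wc' ⊆ Wc := Finset.filter_subset _ _
        have hcard : Wc'.card + 2 ≤ Wc.card := by
          have h1 : Wc' ⊆ (Wc.erase w1).erase w2 := by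
            intro x hx
            rw [hWc'] at hx
            simp only [Finset.mem_filter] at hx
            rw [Finset.mem_erase, Finset.mem_erase]
            refine ⟨fun h => hx.2 (h ▸ hd2), fun h => hx.2 (h ▸ hd1), hx.1⟩
          have := Finset.card_le_card h1
          have h2 : ((Wc.erase w1).erase w2).card + 2 ≤ Wc.card := by
            rw [Finset.card_erase_of_mem, Finset.card_erase_of_mem hw1]
            · have : 0 < Wc.card := Finset.card_pos.mpr ⟨w1, hw1⟩
              have h3 : 2 ≤ Wc.card := Finset.one_lt_card.mpr ⟨w1, hw1, w2, hw2, hne⟩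
              omega
            · exact Finset.mem_erase.mpr ⟨hne.symm, hw2⟩
          omega
        obtain ⟨S', W', hW'sub, hW'card, hdom, hcov⟩ := ih Wc' (by omega)
        refine ⟨insert v S', W', hW'sub.trans hsub, ?_, hdom, ?_⟩
        · have := Finset.card_insert_le v S'
          omega
        · intro u hu hnu
          by_cases hc2 : u = v ∨ G.Adj v u
          · exact ⟨v, Finset.mem_insert_self _ _, by tauto⟩
          · obtain ⟨s, hs, hsd⟩ := hcov u (Finset.mem_filter.mpr ⟨hu, hc2⟩) hnu
            exact ⟨s, Finset.mem_insert_of_mem hs, hsd⟩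
      · refine ⟨∅, Wc, le_refl _, by simp, ?_, by intro u hu hnu; exact absurd hu hnu⟩
        intro v w1 w2 h1 h2 hd1 hd2
        by_contra hne
        exact hex ⟨v, w1, w2, h1, h2, hne, hd1, hd2⟩

end Aux

namespace VC
attribute [local instance] Classical.propDecidable

/-- Bundled data for the cop strategy. -/
structure Setup {V : Type*} (G : SimpleGraph V) where
  hG : G.Connected
  U : Finset V
  S : Finset V
  W : Finset V
  v0 : V
  k : ℕ
  hWU : W ⊆ U
  hcov : ∀ u ∈ U, u ∉ W → ∃ s ∈ S, u = s ∨ G.Adj s u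
  hdom : ∀ v w1 w2, w1 ∈ W → w2 ∈ W → (w1 = v ∨ G.Adj v w1) → (w2 = v ∨ G.Adj v w2) → w1 = w2
  hVC : ∀ ⦃x y : V⦄, G.Adj x y → x ∈ U ∨ y ∈ U
  hk1 : S.toList.length + 1 ≤ k
  hk2 : W.Nonempty → S.toList.length + 2 ≤ k

namespace Setup

variable {V : Type*} {G : SimpleGraph V} (E : Setup G)

/-- number of stations -/
noncomputable def m : ℕ := E.S.toList.length

/-- the `j`-th station -/
noncomputable def stat (j : ℕ) : V := E.S.toList.getD j E.v0

/-- the leader cop -/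
def L : Fin E.k := ⟨E.k - 1, by have := E.hk1; omega⟩

lemma m_le_L : E.m ≤ E.L.1 := by have := E.hk1; simp [L, m] at *; omega

/-- caravan membership -/
def inC (c : Fin E.k → V) (i : Fin E.k) : Prop := E.m ≤ i.1 ∨ c i ≠ E.stat i.1

/-- set of unstationed station-cops -/
noncomputable def unst (c : Fin E.k → V) : Finset (Fin E.k) :=
  Finset.univ.filter (fun i => i.1 < E.m ∧ c i ≠ E.stat i.1)

/-- the center of the star the robber is eventually confined to -/
noncomputable def target (r : V) : V :=
  if r ∈ E.W then r else if h : ∃ w ∈ E.W, G.Adj r w then h.choose else r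

/-- current caravan destination -/
noncomputable def tau (c : Fin E.k → V) (r : V) : V :=
  if h : (E.unst c).Nonempty then E.stat ((E.unst c).min' h).1 else E.target r

/-- the cops' move function -/
noncomputable def sm (c : Fin E.k → V) (r : V) : Fin E.k → V :=
  if _ : ∃ i, c i = r then c
  else if h2 : ∃ i, G.Adj (c i) r then Function.update c h2.choose r
  else if h3 : ∃ i, E.inC c i ∧ c i ≠ c E.L then
    (if G.Adj (c h3.choose) (c E.L) then Function.update c h3.choose (c E.L) else c)
  else Function.update c E.L (toward E.hG (c E.L) (E.tau c r))

lemma sm_shape (c : Fin E.k → V) (r : V) :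
    E.sm c r = c ∨ ∃ j x, (c j = x ∨ G.Adj (c j) x) ∧ E.sm c r = Function.update c j x := by
  unfold sm
  by_cases h1 : ∃ i, c i = r
  · rw [dif_pos h1]; exact Or.inl rfl
  rw [dif_neg h1]
  by_cases h2 : ∃ i, G.Adj (c i) r
  · rw [dif_pos h2]; exact Or.inr ⟨h2.choose, r, Or.inr h2.choose_spec, rfl⟩
  rw [dif_neg h2]
  by_cases h3 : ∃ i, E.inC c i ∧ c i ≠ c E.L
  · rw [dif_pos h3]
    by_cases ha : G.Adj (c h3.choose) (c E.L)
    · rw [if_pos ha]; exact Or.inr ⟨h3.choose, c E.L, Or.inr ha, rfl⟩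
    · rw [if_neg ha]; exact Or.inl rfl
  · rw [dif_neg h3]
    refine Or.inr ⟨E.L, _, ?_, rfl⟩
    rcases toward_eq_or_adj E.hG (c E.L) (E.tau c r) with h | h
    · exact Or.inl h.symm
    · exact Or.inr h

lemma sm_valid (c : Fin E.k → V) (r : V) (i : Fin E.k) :
    E.sm c r i = c i ∨ G.Adj (c i) (E.sm c r i) := by
  rcases E.sm_shape c r with h | ⟨j, x, hx, h⟩
  · rw [h]; exact Or.inl rfl
  · rw [h]
    rcases eq_or_ne i j with rfl | hne
    · rw [Function.update_self]
      rcases hx with h' | h'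
      · exact Or.inl h'.symm
      · exact Or.inr h'
    · rw [Function.update_of_ne hne]; exact Or.inl rfl

lemma sm_lazy (c : Fin E.k → V) (r : V) (i j : Fin E.k)
    (hi : E.sm c r i ≠ c i) (hj : E.sm c r j ≠ c j) : i = j := by
  rcases E.sm_shape c r with h | ⟨j0, x, _, h⟩
  · rw [h] at hi; exact absurd rfl hi
  · rw [h] at hi hj
    rcases eq_or_ne i j0 with rfl | hne
    · rcases eq_or_ne j i with rfl | hne'
      · rfl
      · rw [Function.update_of_ne hne'] at hj; exact absurd rfl hj
    · rw [Function.update_of_ne hne] at hi; exact absurd rfl hi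

end Setup
end VC

namespace VC
namespace Setup
attribute [local instance] Classical.propDecidable
variable {V : Type*} {G : SimpleGraph V} (E : Setup G)

/-- caravan invariant: every caravan cop is at, or adjacent to, the leader -/
def Inv (c : Fin E.k → V) : Prop :=
  ∀ i, E.inC c i → c i = c E.L ∨ G.Adj (c i) (c E.L)

lemma inv_init : E.Inv (fun _ => E.v0) := fun _ _ => Or.inl rfl

lemma step_of_inv {c : Fin E.k → V} {r : V} (hI : E.Inv c)
    (hc1 : ¬∃ i, c i = r) (hc2 : ¬∃ i, G.Adj (c i) r) :
    ((∃ j0, E.inC c j0 ∧ c j0 ≠ c E.L ∧ E.sm c r = Function.update c j0 (c E.L))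
     ∨ ((∀ i, E.inC c i → c i = c E.L) ∧
        E.sm c r = Function.update c E.L (toward E.hG (c E.L) (E.tau c r))))
    ∧ E.Inv (E.sm c r) := by
  have hsm : E.sm c r = (if h3 : ∃ i, E.inC c i ∧ c i ≠ c E.L then
      (if G.Adj (c h3.choose) (c E.L) then Function.update c h3.choose (c E.L) else c)
    else Function.update c E.L (toward E.hG (c E.L) (E.tau c r))) := by
    unfold sm; rw [dif_neg hc1, dif_neg hc2]
  by_cases h3 : ∃ i, E.inC c i ∧ c i ≠ c E.L
  · have hspec := h3.choose_spec
    have hAdj : G.Adj (c h3.choose) (c E.L) := (hI _ hspec.1).resolve_left hspec.2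
    rw [dif_pos h3, if_pos hAdj] at hsm
    have hne : E.L ≠ h3.choose := fun h => hspec.2 (by rw [← h])
    constructor
    · exact Or.inl ⟨h3.choose, hspec.1, hspec.2, hsm⟩
    · rw [hsm]
      intro i hiC
      have hL : Function.update c h3.choose (c E.L) E.L = c E.L :=
        Function.update_of_ne hne _ _
      rcases eq_or_ne i h3.choose with rfl | hne'
      · rw [hL, Function.update_self]; exact Or.inl rfl
      · rw [hL, Function.update_of_ne hne']
        apply hI
        have : Function.update c h3.choose (c E.L) i = c i := Function.update_of_ne hne' _ _
        unfold inC at hiC ⊢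
        exact hiC.imp id (fun h h' => h (this.trans h'))
  · rw [dif_neg h3] at hsm
    push_neg at h3
    constructor
    · exact Or.inr ⟨h3, hsm⟩
    · rw [hsm]
      intro i hiC
      set x := toward E.hG (c E.L) (E.tau c r) with hx
      rcases eq_or_ne i E.L with rfl | hne'
      · exact Or.inl rfl
      · rw [Function.update_self, Function.update_of_ne hne']
        have hci : c i = c E.L := by
          apply h3 i
          have heq : Function.update c E.L x i = c i := Function.update_of_ne hne' _ _
          unfold inC at hiC ⊢
          rwa [heq] at hiC
        rw [hci]
        rcases toward_eq_or_adj E.hG (c E.L) (E.tau c r) with h | h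
        · exact Or.inl (by rw [hx, h])
        · exact Or.inr (hx ▸ h)

/-- number of caravan cops away from the leader -/
noncomputable def off (c : Fin E.k → V) : ℕ :=
  (Finset.univ.filter (fun i => E.inC c i ∧ c i ≠ c E.L)).card

lemma off_le (c : Fin E.k → V) : E.off c ≤ E.k := by
  have := Finset.card_filter_le Finset.univ (fun i => E.inC c i ∧ c i ≠ c E.L)
  simpa [off] using this

section Shapes
variable {c : Fin E.k → V} {j0 : Fin E.k}

/-- facts about a follower step -/
lemma left_facts (hj : E.inC c j0) (hne : c j0 ≠ c E.L) :
    (Function.update c j0 (c E.L)) E.L = c E.L ∧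
    E.unst (Function.update c j0 (c E.L)) ⊆ E.unst c ∧
    E.off (Function.update c j0 (c E.L)) < E.off c := by
  set c' := Function.update c j0 (c E.L) with hc'
  have hLj : E.L ≠ j0 := fun h => hne (by rw [h])
  have hL : c' E.L = c E.L := Function.update_of_ne hLj _ _
  refine ⟨hL, ?_, ?_⟩
  · intro i hi
    unfold unst at hi ⊢
    simp only [Finset.mem_filter, Finset.mem_univ, true_and] at hi ⊢
    rcases eq_or_ne i j0 with rfl | hne'
    · refine ⟨hi.1, ?_⟩
      rcases hj with h | h
      · omega
      · exact h
    · rw [hc', Function.update_of_ne hne'] at hi; exact hi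
  · unfold off
    have hsub : (Finset.univ.filter (fun i => E.inC c' i ∧ c' i ≠ c' E.L)) ⊆
        (Finset.univ.filter (fun i => E.inC c i ∧ c i ≠ c E.L)).erase j0 := by
      intro i hi
      simp only [Finset.mem_filter, Finset.mem_univ, true_and] at hi
      rcases eq_or_ne i j0 with rfl | hne'
      · exfalso; apply hi.2; rw [hL, hc', Function.update_self]
      · rw [Finset.mem_erase]
        have hci : c' i = c i := Function.update_of_ne hne' _ _
        refine ⟨hne', ?_⟩
        simp only [Finset.mem_filter, Finset.mem_univ, true_and]
        rw [hL, hci] at hi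
        unfold inC at hi ⊢
        rwa [hci] at hi
    have hj0 : j0 ∈ Finset.univ.filter (fun i => E.inC c i ∧ c i ≠ c E.L) := by
      simp only [Finset.mem_filter, Finset.mem_univ, true_and]; exact ⟨hj, hne⟩
    calc (Finset.univ.filter (fun i => E.inC c' i ∧ c' i ≠ c' E.L)).card
        ≤ ((Finset.univ.filter (fun i => E.inC c i ∧ c i ≠ c E.L)).erase j0).card :=
          Finset.card_le_card hsub
      _ < (Finset.univ.filter (fun i => E.inC c i ∧ c i ≠ c E.L)).card := by
          rw [Finset.card_erase_of_mem hj0]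
          have : 0 < (Finset.univ.filter (fun i => E.inC c i ∧ c i ≠ c E.L)).card :=
            Finset.card_pos.mpr ⟨j0, hj0⟩
          omega

/-- a follower step does not move station cops off their stations -/
lemma unst_left_cases (hj : E.inC c j0) (hne : c j0 ≠ c E.L) :
    E.unst (Function.update c j0 (c E.L)) = E.unst c ∨
    (E.unst (Function.update c j0 (c E.L))).card < (E.unst c).card := by
  have hsub := (E.left_facts hj hne).2.1
  by_cases h : E.unst (Function.update c j0 (c E.L)) = E.unst c
  · exact Or.inl h
  · exact Or.inr (Finset.card_lt_card (hsub.ssubset_of_ne h))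

/-- facts about a leader step -/
lemma right_facts {x : V} :
    (Function.update c E.L x) E.L = x ∧ E.unst (Function.update c E.L x) = E.unst c := by
  refine ⟨Function.update_self _ _ _, ?_⟩
  ext i
  unfold unst
  simp only [Finset.mem_filter, Finset.mem_univ, true_and]
  rcases eq_or_ne i E.L with rfl | hne'
  · have hm := E.m_le_L
    constructor <;> (intro h; exact absurd h.1 (by omega))
  · rw [Function.update_of_ne hne']

end Shapes
end Setup
end VC

namespace VC
namespace Setup
attribute [local instance] Classical.propDecidable
variable {V : Type*} {G : SimpleGraph V} (E : Setup G)

lemma tgt_self {r : V} (h : r ∈ E.W) : E.target r = r := by unfold target; rw [if_pos h]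

lemma tgt_close (r : V) : r = E.target r ∨ G.Adj r (E.target r) := by
  unfold target
  by_cases h : r ∈ E.W
  · rw [if_pos h]; exact Or.inl rfl
  rw [if_neg h]
  by_cases h2 : ∃ w ∈ E.W, G.Adj r w
  · rw [dif_pos h2]; exact Or.inr h2.choose_spec.2
  · rw [dif_neg h2]; exact Or.inl rfl

lemma tgt_unique {r w : V} (hr : r ∉ E.W) (hw : w ∈ E.W) (ha : G.Adj r w) :
    E.target r = w := by
  have h2 : ∃ w ∈ E.W, G.Adj r w := ⟨w, hw, ha⟩
  unfold target
  rw [if_neg hr, dif_pos h2]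
  exact E.hdom r _ w h2.choose_spec.1 hw (Or.inr h2.choose_spec.2) (Or.inr ha)

lemma tau_congr {c c' : Fin E.k → V} {r r' : V} (h : E.unst c' = E.unst c)
    (hne : (E.unst c).Nonempty) : E.tau c' r' = E.tau c r := by
  have hne' : (E.unst c').Nonempty := by rw [h]; exact hne
  unfold tau
  rw [dif_pos hne', dif_pos hne]
  have hmin : (E.unst c').min' hne' = (E.unst c).min' hne := by
    apply le_antisymm
    · exact Finset.min'_le _ _ (by rw [h]; exact (E.unst c).min'_mem hne)
    · exact Finset.min'_le _ _ (by rw [← h]; exact (E.unst c').min'_mem hne')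
  rw [hmin]

lemma lex0 {K x y cc cc' : ℕ} (hxy : x < y) (hc : cc' < K) :
    x * K + cc' < y * K + cc := by
  calc x * K + cc' < x * K + K := by omega
    _ = (x + 1) * K := by ring
    _ ≤ y * K := Nat.mul_le_mul_right K hxy
    _ ≤ y * K + cc := Nat.le_add_right _ _

lemma lex2 {D K a b b' cc cc' : ℕ} (hb : b' < b) (hc : cc' < K) :
    (a * D + b') * K + cc' < (a * D + b) * K + cc :=
  lex0 (by omega) hc

lemma lex3 {D K a b a' b' cc cc' : ℕ} (ha : a' < a) (hb : b' < D) (hc : cc' < K) :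
    (a' * D + b') * K + cc' < (a * D + b) * K + cc := by
  refine lex0 ?_ hc
  calc a' * D + b' < a' * D + D := by omega
    _ = (a' + 1) * D := by ring
    _ ≤ a * D := Nat.mul_le_mul_right D ha
    _ ≤ a * D + b := Nat.le_add_right _ _

section Master
variable [Fintype V]

/-- The master lemma: a play in which the cops follow `sm` and are never at, nor move
onto, the robber's vertex, is impossible. -/
theorem master (cs : ℕ → Fin E.k → V) (rs : ℕ → V)
    (h0 : cs 0 = fun _ => E.v0)
    (hcs : ∀ n, cs (n + 1) = E.sm (cs n) (rs n))
    (hrs : ∀ n, rs (n + 1) = rs n ∨ G.Adj (rs n) (rs (n + 1)))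
    (hH2 : ∀ n i, cs n i ≠ rs n)
    (hH3 : ∀ n i, E.sm (cs n) (rs n) i ≠ rs n) : False := by
  set D := Fintype.card V with hDdef
  have hA1 : ∀ n i, ¬ G.Adj (cs n i) (rs n) := by
    intro n i hadj
    have h2 : ∃ i, G.Adj (cs n i) (rs n) := ⟨i, hadj⟩
    have : E.sm (cs n) (rs n) h2.choose = rs n := by
      unfold sm
      rw [dif_neg (by push_neg; exact fun j => hH2 n j), dif_pos h2, Function.update_self]
    exact hH3 n h2.choose this
  have hc1 : ∀ n, ¬∃ i, cs n i = rs n := fun n h => h.elim (fun i hi => hH2 n i hi)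
  have hc2 : ∀ n, ¬∃ i, G.Adj (cs n i) (rs n) := fun n h => h.elim (fun i hi => hA1 n i hi)
  have hInv : ∀ n, E.Inv (cs n) := by
    intro n
    induction n with
    | zero => rw [h0]; exact E.inv_init
    | succ n ih => rw [hcs n]; exact (E.step_of_inv ih (hc1 n) (hc2 n)).2
  have hstep : ∀ n,
      (∃ j0, E.inC (cs n) j0 ∧ cs n j0 ≠ cs n E.L ∧
        cs (n + 1) = Function.update (cs n) j0 (cs n E.L))
      ∨ ((∀ i, E.inC (cs n) i → cs n i = cs n E.L) ∧
        cs (n + 1) = Function.update (cs n) E.L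
          (toward E.hG (cs n E.L) (E.tau (cs n) (rs n)))) := by
    intro n
    have := (E.step_of_inv (hInv n) (hc1 n) (hc2 n)).1
    rwa [← hcs n] at this
  have hmono : ∀ n, E.unst (cs (n + 1)) ⊆ E.unst (cs n) := by
    intro n
    rcases hstep n with ⟨j0, hj, hne, hup⟩ | ⟨_, hup⟩
    · rw [hup]; exact (E.left_facts hj hne).2.1
    · rw [hup, (E.right_facts).2]
  have hphase1 : ∃ T, E.unst (cs T) = ∅ := by
    by_contra hne
    push_neg at hne
    have hnonemp : ∀ n, (E.unst (cs n)).Nonempty :=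
      fun n => hne n
    set Φ : ℕ → ℕ := fun n =>
      ((E.unst (cs n)).card * D + G.dist (cs n E.L) (E.tau (cs n) (rs n))) * (E.k + 1)
        + E.off (cs n) with hPhi
    have hdec : ∀ n, Φ (n + 1) < Φ n := by
      intro n
      rcases hstep n with ⟨j0, hj, hnej, hup⟩ | ⟨hall, hup⟩
      · obtain ⟨hL, hsub, hoff⟩ := E.left_facts hj hnej
        have hL' : cs (n+1) E.L = cs n E.L := by rw [hup]; exact hL
        have hoff' : E.off (cs (n+1)) < E.off (cs n) := by rw [hup]; exact hoff
        rcases E.unst_left_cases hj hnej with hu | hu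
        · have hu' : E.unst (cs (n+1)) = E.unst (cs n) := by rw [hup]; exact hu
          have htau' : E.tau (cs (n+1)) (rs (n+1)) = E.tau (cs n) (rs n) :=
            E.tau_congr hu' (hnonemp n)
          simp only [hPhi, hu', hL', htau']
          exact Nat.add_lt_add_left hoff' _
        · have hu' : (E.unst (cs (n+1))).card < (E.unst (cs n)).card := by
            rw [hup]; exact hu
          simp only [hPhi]
          exact lex3 hu' (dist_lt_card E.hG _ _)
            (by have := E.off_le (cs (n+1)); omega)
      · have hu' : E.unst (cs (n+1)) = E.unst (cs n) := by
          rw [hup]; exact (E.right_facts).2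
        have htau' : E.tau (cs (n+1)) (rs (n+1)) = E.tau (cs n) (rs n) :=
          E.tau_congr hu' (hnonemp n)
        have htau : E.tau (cs n) (rs n) = E.stat ((E.unst (cs n)).min' (hnonemp n)).1 := by
          unfold tau; rw [dif_pos (hnonemp n)]
        have hminu' : cs n ((E.unst (cs n)).min' (hnonemp n)) ≠
            E.stat ((E.unst (cs n)).min' (hnonemp n)).1 := by
          have hmm := Finset.min'_mem (E.unst (cs n)) (hnonemp n)
          unfold unst at hmm
          simp only [Finset.mem_filter, Finset.mem_univ, true_and] at hmm
          exact hmm.2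
        have hiC : E.inC (cs n) ((E.unst (cs n)).min' (hnonemp n)) := Or.inr hminu'
        have hgτ : cs n E.L ≠ E.tau (cs n) (rs n) := by
          rw [htau]
          intro hgeq
          exact hminu' (by rw [hall _ hiC, hgeq])
        have hdist : G.dist (cs (n+1) E.L) (E.tau (cs n) (rs n))
            < G.dist (cs n E.L) (E.tau (cs n) (rs n)) := by
          rw [hup, (E.right_facts).1]
          exact toward_dist E.hG hgτ
        simp only [hPhi, hu', htau']
        exact lex2 hdist (by have := E.off_le (cs (n+1)); omega)
    have hbound : ∀ j, Φ j + j ≤ Φ 0 := by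
      intro j
      induction j with
      | zero => omega
      | succ j ih => have := hdec j; omega
    have := hbound (Φ 0 + 1)
    omega
  obtain ⟨T, hT⟩ := hphase1
  have hTall : ∀ n, T ≤ n → E.unst (cs n) = ∅ := by
    intro n hn
    induction n, hn using Nat.le_induction with
    | base => exact hT
    | succ n hn ih => exact Finset.subset_empty.mp (ih ▸ hmono n)
  have hstatAt : ∀ n, T ≤ n → ∀ j : Fin E.k, j.1 < E.m → cs n j = E.stat j.1 := by
    intro n hn j hj
    by_contra hnej
    have hmem : j ∈ E.unst (cs n) := by
      unfold unst; simp only [Finset.mem_filter, Finset.mem_univ, true_and]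
      exact ⟨hj, hnej⟩
    rw [hTall n hn] at hmem
    simp at hmem
  have hstatcop : ∀ n, T ≤ n → ∀ s ∈ E.S, ∃ i : Fin E.k, cs n i = s := by
    intro n hn s hs
    obtain ⟨j, hj, hjs⟩ := List.mem_iff_getElem.mp (Finset.mem_toList.mpr hs)
    have hjm : j < E.m := hj
    have hjk : j < E.k := by have := E.hk1; have : E.m + 1 ≤ E.k := this; omega
    refine ⟨⟨j, hjk⟩, ?_⟩
    rw [hstatAt n hn ⟨j, hjk⟩ hjm]
    unfold stat
    rw [List.getD_eq_getElem _ _ hj]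
    exact hjs
  have hF : ∀ n, T ≤ n → rs n ∈ E.U → rs n ∈ E.W := by
    intro n hn hUm
    by_contra hnW
    obtain ⟨s, hsS, hsd⟩ := E.hcov _ hUm hnW
    obtain ⟨i, hi⟩ := hstatcop n hn s hsS
    rcases hsd with heq | hadj
    · exact hH2 n i (by rw [hi, heq])
    · exact hA1 n i (by rw [hi]; exact hadj)
  have hC2 : ∀ n, T ≤ n → E.target (rs (n+1)) = E.target (rs n) := by
    intro n hn
    rcases hrs n with heq | hadj
    · rw [heq]
    have hnrr : rs n ≠ rs (n+1) := G.ne_of_adj hadj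
    rcases E.hVC hadj with hU1 | hU2
    · have hW1 : rs n ∈ E.W := hF n hn hU1
      have hnW2 : rs (n+1) ∉ E.W := by
        intro hW2
        exact hnrr (E.hdom (rs n) _ _ hW1 hW2 (Or.inl rfl) (Or.inr hadj))
      rw [E.tgt_self hW1]
      exact E.tgt_unique hnW2 hW1 hadj.symm
    · have hW2 : rs (n+1) ∈ E.W := hF (n+1) (by omega) hU2
      have hnW1 : rs n ∉ E.W := by
        intro hW1
        exact hnrr (E.hdom (rs n) _ _ hW1 hW2 (Or.inl rfl) (Or.inr hadj))
      rw [E.tgt_self hW2]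
      exact (E.tgt_unique hnW1 hW2 hadj).symm
  set w := E.target (rs T) with hw
  have hCw : ∀ n, T ≤ n → E.target (rs n) = w := by
    intro n hn
    induction n, hn using Nat.le_induction with
    | base => rfl
    | succ n hn ih => rw [hC2 n hn, ih]
  have htauE : ∀ n, T ≤ n → E.tau (cs n) (rs n) = w := by
    intro n hn
    unfold tau
    rw [dif_neg (by rw [hTall n hn]; simp), hCw n hn]
  set Ψ : ℕ → ℕ := fun n => G.dist (cs n E.L) w * (E.k + 1) + E.off (cs n) with hPsi
  have hdec2 : ∀ n, T ≤ n → Ψ (n + 1) < Ψ n := by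
    intro n hn
    rcases hstep n with ⟨j0, hj, hnej, hup⟩ | ⟨hall, hup⟩
    · obtain ⟨hL, _, hoff⟩ := E.left_facts hj hnej
      have hL' : cs (n+1) E.L = cs n E.L := by rw [hup]; exact hL
      have hoff' : E.off (cs (n+1)) < E.off (cs n) := by rw [hup]; exact hoff
      simp only [hPsi, hL']
      exact Nat.add_lt_add_left hoff' _
    · have hgw : cs n E.L ≠ w := by
        intro h
        rcases E.tgt_close (rs n) with h1 | h1
        · refine hH2 n E.L ?_
          rw [h, ← hCw n hn, ← h1]
        · refine hA1 n E.L ?_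
          rw [h, ← hCw n hn]
          exact h1.symm
      have hdist : G.dist (cs (n+1) E.L) w < G.dist (cs n E.L) w := by
        rw [hup, (E.right_facts).1, htauE n hn]
        exact toward_dist E.hG hgw
      simp only [hPsi]
      exact lex0 hdist (by have := E.off_le (cs (n+1)); omega)
  have hbound : ∀ j, Ψ (T + j) + j ≤ Ψ T := by
    intro j
    induction j with
    | zero => simp
    | succ j ih =>
        have := hdec2 (T + j) (by omega)
        have h2 : T + (j+1) = (T + j) + 1 := by omega
        rw [h2]
        omega
  have := hbound (Ψ T + 1)
  omega

end Master
end Setup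
end VC

namespace VC
namespace Setup
attribute [local instance] Classical.propDecidable
variable {V : Type*} [Fintype V] [DecidableEq V] {G : SimpleGraph V} (E : Setup G)

/-- The lazy cop strategy. -/
noncomputable def LCS : LazyCopStrat G E.k where
  init := fun _ => E.v0
  move := E.sm
  valid := E.sm_valid
  lazy := E.sm_lazy

theorem lazyWin : LazyCopsWin G E.k := by
  refine ⟨E.LCS, fun RS => ?_⟩
  by_contra hnc
  unfold gCaught at hnc
  push_neg at hnc
  exact E.master (fun n => (gplay E.LCS.init E.LCS.move RS.init RS.move n).1)
    (fun n => (gplay E.LCS.init E.LCS.move RS.init RS.move n).2) rfl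
    (fun n => rfl) (fun n => RS.valid _ _) (fun n i => (hnc n i).1)
    (fun n i => (hnc n i).2)

/-- The attacking-game cop strategy. -/
noncomputable def ACS : AttackCopStrat G E.k where
  init := fun _ => E.v0
  move := fun c r i =>
    if h : ∀ j, (c j).isSome then some (E.sm (fun j => (c j).get (h j)) r i)
    else if h2 : ∃ j, ∃ y, c j = some y ∧ G.Adj y r then
      (if i = h2.choose then some r else c i)
    else c i
  valid := by
    intro c r i
    constructor
    · intro hnone
      have h : ¬ ∀ j, (c j).isSome := fun h => by
        have := h i; rw [hnone] at this; simp at this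
      rw [dif_neg h]
      by_cases h2 : ∃ j, ∃ y, c j = some y ∧ G.Adj y r
      · rw [dif_pos h2]
        by_cases hij : i = h2.choose
        · exfalso
          obtain ⟨y, hy, _⟩ := h2.choose_spec
          rw [← hij, hnone] at hy
          cases hy
        · rw [if_neg hij]; exact hnone
      · rw [dif_neg h2]; exact hnone
    · intro x hx
      by_cases h : ∀ j, (c j).isSome
      · rw [dif_pos h]
        have hgi : (c i).get (h i) = x := by simp [hx]
        rcases E.sm_valid (fun j => (c j).get (h j)) r i with hv | hv
        · left; rw [hv, hgi]
        · right
          refine ⟨E.sm (fun j => (c j).get (h j)) r i, ?_, rfl⟩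
          rwa [hgi] at hv
      rw [dif_neg h]
      by_cases h2 : ∃ j, ∃ y, c j = some y ∧ G.Adj y r
      · rw [dif_pos h2]
        by_cases hij : i = h2.choose
        · rw [if_pos hij]
          right
          obtain ⟨y, hy, hay⟩ := h2.choose_spec
          rw [← hij, hx] at hy
          refine ⟨r, ?_, rfl⟩
          rwa [Option.some_inj.mp hy]
        · rw [if_neg hij]; left; exact hx
      · rw [dif_neg h2]; left; exact hx

/-- The mirrored (`V`-valued) play of the attacking game. -/
noncomputable def mirror (RS : AttackRobStrat G E.k) : ℕ → (Fin E.k → V) × V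
  | 0 => (fun _ => E.v0, RS.init fun _ => some E.v0)
  | n + 1 =>
    let p := mirror RS n
    let c' := E.sm p.1 p.2
    (c', RS.move (fun i => some (c' i)) p.2)

lemma ACS_move_alive (c : Fin E.k → V) (r : V) :
    E.ACS.move (fun i => some (c i)) r = fun i => some (E.sm c r i) := by
  funext i
  exact dif_pos (fun j => rfl)

end Setup
end VC

namespace VC
namespace Setup
attribute [local instance] Classical.propDecidable
set_option linter.unusedSectionVars false
variable {V : Type*} [Fintype V] [DecidableEq V] {G : SimpleGraph V} (E : Setup G)

lemma sm_catch {c : Fin E.k → V} {r : V} (h1 : ∀ i, c i ≠ r) {i} (hadj : G.Adj (c i) r) :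
    ∃ j, E.sm c r j = r := by
  have h2 : ∃ i, G.Adj (c i) r := ⟨i, hadj⟩
  refine ⟨h2.choose, ?_⟩
  unfold sm
  rw [dif_neg (by push_neg; exact h1), dif_pos h2, Function.update_self]

lemma stat_index {s : V} (hs : s ∈ E.S) : ∃ j, ∃ _ : j < E.k, j < E.m ∧ E.stat j = s := by
  obtain ⟨j, hj, hjs⟩ := List.mem_iff_getElem.mp (Finset.mem_toList.mpr hs)
  have hjm : j < E.m := hj
  have hk1 := E.hk1
  have hmm : E.m = E.S.toList.length := rfl
  have hjk : j < E.k := by omega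
  refine ⟨j, hjk, hjm, ?_⟩
  unfold stat
  rw [List.getD_eq_getElem _ _ hj]
  exact hjs

lemma ACS_move_rescue (c : Fin E.k → Option V) (r : V) (hna : ¬ ∀ j, (c j).isSome)
    (h2 : ∃ j, ∃ y, c j = some y ∧ G.Adj y r) :
    E.ACS.move c r h2.choose = some r := by
  show (if h : ∀ j, (c j).isSome then some (E.sm (fun j => (c j).get (h j)) r h2.choose)
    else if h2' : ∃ j, ∃ y, c j = some y ∧ G.Adj y r then
      (if h2.choose = h2'.choose then some r else c h2.choose)
    else c h2.choose) = some r
  rw [dif_neg hna, dif_pos h2, if_pos rfl]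

theorem attackWin : AttackCopsWin G E.k := by
  refine ⟨E.ACS, fun RS => ?_⟩
  by_contra hnc
  unfold AttackCaught at hnc
  push_neg at hnc
  set cs : ℕ → Fin E.k → V := fun n => (E.mirror RS n).1 with hcsdef
  set rs : ℕ → V := fun n => (E.mirror RS n).2 with hrsdef
  have hcs1 : ∀ n, cs (n + 1) = E.sm (cs n) (rs n) := fun n => rfl
  have hrs1 : ∀ n, rs (n + 1) = RS.move (fun i => some (cs (n + 1) i)) (rs n) := fun n => rfl
  have key : ∀ n, aplay E.ACS RS n = (fun i => some (cs n i), rs n) ∧ E.Inv (cs n) := by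
    intro n
    induction n with
    | zero => exact ⟨rfl, E.inv_init⟩
    | succ n ih =>
      obtain ⟨ihm, ihI⟩ := ih
      have hA2 : ∀ i, cs n i ≠ rs n := by
        intro i hi
        have h := (hnc n).1 i
        rw [ihm] at h
        exact h (by show some (cs n i) = some (rs n); rw [hi])
      have hmv := E.ACS_move_alive (cs n) (rs n)
      have hH3 : ∀ i, E.sm (cs n) (rs n) i ≠ rs n := by
        intro i hi
        have h := (hnc n).2 i
        rw [ihm] at h
        apply h
        show E.ACS.move (fun i => some (cs n i)) (rs n) i = some (rs n)
        rw [hmv]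
        show some (E.sm (cs n) (rs n) i) = some (rs n)
        rw [hi]
      have hA1 : ∀ i, ¬ G.Adj (cs n i) (rs n) := by
        intro i hadj
        obtain ⟨j, hj⟩ := E.sm_catch hA2 hadj
        exact hH3 j hj
      have hc1 : ¬∃ i, cs n i = rs n := fun ⟨i, hi⟩ => hA2 i hi
      have hc2 : ¬∃ i, G.Adj (cs n i) (rs n) := fun ⟨i, hi⟩ => hA1 i hi
      have hInv' : E.Inv (cs (n + 1)) := by
        rw [hcs1 n]; exact (E.step_of_inv ihI hc1 hc2).2
      refine ⟨?_, hInv'⟩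
      have hnokill : ¬ (rs (n + 1) ≠ rs n ∧
          (Finset.univ.filter fun i =>
            (some (cs (n + 1) i) : Option V) = some (rs (n + 1))).card = 1) := by
        rintro ⟨hneq, hcard⟩
        have hadjr : G.Adj (rs n) (rs (n + 1)) := by
          rcases RS.valid (fun i => some (cs (n + 1) i)) (rs n) with h | h
          · exact absurd ((hrs1 n).trans h) hneq
          · exact (hrs1 n) ▸ h
        obtain ⟨i0, hi0mem⟩ := Finset.card_pos.mp
          (by omega : 0 < (Finset.univ.filter fun i =>
            (some (cs (n + 1) i) : Option V) = some (rs (n + 1))).card)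
        have hi0 : cs (n + 1) i0 = rs (n + 1) :=
          Option.some_inj.mp (Finset.mem_filter.mp hi0mem).2
        have hshape := (E.step_of_inv ihI hc1 hc2).1
        rw [← hcs1 n] at hshape
        rcases hshape with ⟨j0, hj, hnej, hup⟩ | ⟨hall, hup⟩
        · rcases eq_or_ne i0 j0 with rfl | hne'
          · apply hA1 E.L
            have h : cs n E.L = rs (n + 1) := by rw [← hi0, hup, Function.update_self]
            rw [h]; exact hadjr.symm
          · apply hA1 i0
            have h : cs n i0 = rs (n + 1) := by rw [← hi0, hup, Function.update_of_ne hne']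
            rw [h]; exact hadjr.symm
        · rcases eq_or_ne i0 E.L with rfl | hne'
          swap
          · apply hA1 i0
            have h : cs n i0 = rs (n + 1) := by rw [← hi0, hup, Function.update_of_ne hne']
            rw [h]; exact hadjr.symm
          -- leader was killed on its bold step
          have hxg : rs (n + 1) ≠ cs n E.L := by
            intro h
            exact hA1 E.L (by rw [← h]; exact hadjr.symm)
          have hx : rs (n + 1) = toward E.hG (cs n E.L) (E.tau (cs n) (rs n)) := by
            rw [← hi0, hup, Function.update_self]
          have hadjgx : G.Adj (cs n E.L) (rs (n + 1)) := by
            rcases toward_eq_or_adj E.hG (cs n E.L) (E.tau (cs n) (rs n)) with h | h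
            · exact absurd (hx.trans h) hxg
            · rw [hx]; exact h
          have hcomp : ∃ j1 : Fin E.k, j1 ≠ E.L ∧ cs (n + 1) j1 ≠ rs (n + 1) ∧
              G.Adj (cs (n + 1) j1) (rs (n + 1)) := by
            by_cases hun : (E.unst (cs n)).Nonempty
            · set j1 := (E.unst (cs n)).min' hun with hj1def
              have hj1mem := Finset.min'_mem (E.unst (cs n)) hun
              have hj1m : (j1 : ℕ) < E.m ∧ cs n j1 ≠ E.stat j1.1 := by
                have h : j1 ∈ E.unst (cs n) := hj1mem; unfold unst at h; simpa using h
              have hj1L : j1 ≠ E.L := by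
                have hmL := E.m_le_L
                have hme : E.S.toList.length = E.m := rfl
                intro h
                rw [h] at hj1m
                omega
              have hceq : cs (n + 1) j1 = cs n E.L := by
                rw [hup, Function.update_of_ne hj1L]
                exact hall _ (Or.inr hj1m.2)
              exact ⟨j1, hj1L, by rw [hceq]; exact fun h => hxg h.symm, by rw [hceq]; exact hadjgx⟩
            · have hemp : E.unst (cs n) = ∅ := Finset.not_nonempty_iff_eq_empty.mp hun
              have hstatn : ∀ j : Fin E.k, (j : ℕ) < E.m → cs n j = E.stat j.1 := by
                intro j hjm
                by_contra hne2
                have hmem : j ∈ E.unst (cs n) := by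
                  unfold unst
                  simp only [Finset.mem_filter, Finset.mem_univ, true_and]
                  exact ⟨hjm, hne2⟩
                rw [hemp] at hmem
                simp at hmem
              by_cases hW : E.W.Nonempty
              · have hmk : E.m + 2 ≤ E.k := E.hk2 hW
                have hmlt : E.m < E.k := by omega
                have hj1L : (⟨E.m, hmlt⟩ : Fin E.k) ≠ E.L := by
                  intro h
                  have h2 : E.m = E.k - 1 := congrArg Fin.val h
                  omega
                have hceq : cs (n + 1) ⟨E.m, hmlt⟩ = cs n E.L := by
                  rw [hup, Function.update_of_ne hj1L]
                  exact hall _ (Or.inl (le_refl E.m))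
                exact ⟨⟨E.m, hmlt⟩, hj1L, by rw [hceq]; exact fun h => hxg h.symm,
                  by rw [hceq]; exact hadjgx⟩
              · have hWe : E.W = ∅ := Finset.not_nonempty_iff_eq_empty.mp hW
                rcases E.hVC hadjr with hU1 | hU2
                · obtain ⟨s, hsS, hsd⟩ := E.hcov _ hU1 (by rw [hWe]; simp)
                  obtain ⟨j, hjk, hjm, hjs⟩ := E.stat_index hsS
                  have hjs' : cs n ⟨j, hjk⟩ = s := by rw [hstatn ⟨j, hjk⟩ hjm]; exact hjs
                  rcases hsd with heq | hadj
                  · exact absurd (by rw [hjs', ← heq]) (hA2 ⟨j, hjk⟩)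
                  · exact absurd (by rw [hjs']; exact hadj) (hA1 ⟨j, hjk⟩)
                · obtain ⟨s, hsS, hsd⟩ := E.hcov _ hU2 (by rw [hWe]; simp)
                  obtain ⟨j, hjk, hjm, hjs⟩ := E.stat_index hsS
                  have hjs' : cs n ⟨j, hjk⟩ = s := by rw [hstatn ⟨j, hjk⟩ hjm]; exact hjs
                  have hjL : (⟨j, hjk⟩ : Fin E.k) ≠ E.L := by
                    have hmL := E.m_le_L
                    intro h
                    have h2 : j = E.L.1 := congrArg Fin.val h
                    omega
                  have hceq : cs (n + 1) ⟨j, hjk⟩ = s := by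
                    rw [hup, Function.update_of_ne hjL]
                    exact hjs'
                  rcases hsd with heq | hadj
                  · exact absurd (show G.Adj (cs n ⟨j, hjk⟩) (rs n) by
                      rw [hjs', ← heq]; exact hadjr.symm) (hA1 ⟨j, hjk⟩)
                  · exact ⟨⟨j, hjk⟩, hjL, by rw [hceq]; exact (G.ne_of_adj hadj),
                      by rw [hceq]; exact hadj⟩
          obtain ⟨j1, hj1L, hj1ne, hj1adj⟩ := hcomp
          -- compute the killed configuration
          have e2 : aplay E.ACS RS (n + 1) =
              ((fun i => if (some (cs (n + 1) i) : Option V) = some (rs (n + 1)) then none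
                 else some (cs (n + 1) i)), rs (n + 1)) := by
            show (let p := aplay E.ACS RS n
              let c' := E.ACS.move p.1 p.2
              let r' := RS.move c' p.2
              if r' ≠ p.2 ∧ (Finset.univ.filter fun i => c' i = some r').card = 1 then
                ((fun i => if c' i = some r' then none else c' i), r')
              else (c', r')) = _
            rw [ihm]
            dsimp only
            rw [hmv, ← hcs1 n, ← hrs1 n, if_pos ⟨hneq, hcard⟩]
          set cfg : Fin E.k → Option V := fun i =>
            if (some (cs (n + 1) i) : Option V) = some (rs (n + 1)) then none
            else some (cs (n + 1) i) with hcfg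
          have hcfgL : cfg E.L = none := by
            rw [hcfg]
            simp only
            rw [if_pos (by rw [hi0])]
          have hcfgj1 : cfg j1 = some (cs (n + 1) j1) := by
            rw [hcfg]
            simp only
            rw [if_neg (by simpa using hj1ne)]
          have hnall : ¬ ∀ j, (cfg j).isSome := by
            intro h
            have h2 := h E.L
            rw [hcfgL] at h2
            simp at h2
          have h2ex : ∃ j, ∃ y, cfg j = some y ∧ G.Adj y (rs (n + 1)) :=
            ⟨j1, cs (n + 1) j1, hcfgj1, hj1adj⟩
          apply (hnc (n + 1)).2 h2ex.choose
          rw [e2]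
          exact E.ACS_move_rescue cfg (rs (n + 1)) hnall h2ex
      -- no elimination: the play mirrors
      show aplay E.ACS RS (n + 1) = _
      calc aplay E.ACS RS (n + 1)
          = (let p := aplay E.ACS RS n
             let c' := E.ACS.move p.1 p.2
             let r' := RS.move c' p.2
             if r' ≠ p.2 ∧ (Finset.univ.filter fun i => c' i = some r').card = 1 then
               ((fun i => if c' i = some r' then none else c' i), r')
             else (c', r')) := rfl
        _ = (fun i => some (cs (n + 1) i), rs (n + 1)) := by
             rw [ihm]
             dsimp only
             rw [hmv, ← hcs1 n, ← hrs1 n, if_neg hnokill]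
  exact E.master cs rs rfl hcs1 (fun n => RS.valid _ _)
    (fun n i => by
      intro hi
      have h := (hnc n).1 i
      rw [(key n).1] at h
      exact h (by show some (cs n i) = some (rs n); rw [hi]))
    (fun n i => by
      intro hi
      have h := (hnc n).2 i
      rw [(key n).1] at h
      apply h
      show E.ACS.move (fun i => some (cs n i)) (rs n) i = some (rs n)
      rw [E.ACS_move_alive]
      show some (E.sm (cs n) (rs n) i) = some (rs n)
      rw [hi])

end Setup
end VC

/-- If a connected graph `G` has a vertex cover of size `t`, then
`c_lazy(G) ≤ ⌈t/2⌉ + 1` and `c_attack(G) ≤ ⌈t/2⌉ + 1`. -/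
theorem lazy_attack_copNumber_le_vertexCover
    {V : Type*} [Fintype V] [DecidableEq V] (G : SimpleGraph V) (hG : G.Connected)
    (U : Finset V) (hU : _root_.IsVertexCover G U) (t : ℕ) (ht : U.card = t) :
    lazyCopNumber G ≤ (t + 1) / 2 + 1 ∧ attackCopNumber G ≤ (t + 1) / 2 + 1 := by
  classical
  obtain ⟨S, W, hWU, hcard, hdom, hcov⟩ := greedy G U.card U le_rfl
  have hne : Nonempty V := hG.nonempty
  set k := (t + 1) / 2 + 1 with hk
  have hlen : S.toList.length = S.card := Finset.length_toList S
  have hk1 : S.toList.length + 1 ≤ k := by omega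
  have hk2 : W.Nonempty → S.toList.length + 2 ≤ k := by
    intro h
    have := Finset.card_pos.mpr h
    omega
  let E : VC.Setup G := ⟨hG, U, S, W, Classical.arbitrary V, k, hWU, hcov, hdom, hU, hk1, hk2⟩
  constructor
  · exact Nat.sInf_le E.lazyWin
  · exact Nat.sInf_le E.attackWin
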